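/- Let g ∈ 𝕀^n, let k ∈ ℕ*, and let x_1 ∈ {1,…,n} satisfy std(g)^k(x_1) = x_1. Define x_2 = std(g)(x_1), …, x_k = std(g)(x_{k−1}), and i_1 = g_{x_1}, …, i_k = g_{x_k}. Then the size d of the cycle of x_1 in std(g) equals the length of the root of the word i = (i_1,…,i_k), i.e., the length of the unique primitive word r with i = r^{k/d}. -/

import Mathlib

lemma len_flat {α : Type*} (t : ℕ) (w : List α) :
    ((List.replicate t w).flatten).length = t * w.length := by
  simp [List.length_flatten, List.map_replicate, List.sum_replicate, smul_eq_mul]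

lemma getElem_flat {α : Type*} (w : List α) :
    ∀ (t j : ℕ) (h : j < t * w.length),
      ((List.replicate t w).flatten)[j]'(by rw [len_flat]; exact h) =
        w[j % w.length]'(Nat.mod_lt j (by
          rcases Nat.eq_zero_or_pos w.length with h0 | h0
          · rw [h0, Nat.mul_zero] at h; exact absurd h (Nat.not_lt_zero j)
          · exact h0)) := by
  intro t
  induction t with
  | zero => intro j h; simp at h
  | succ t ih =>
    intro j h
    have hw : 0 < w.length := by
      rcases Nat.eq_zero_or_pos w.length with h0 | h0
      · rw [h0, Nat.mul_zero] at h; exact absurd h (Nat.not_lt_zero j)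
      · exact h0
    have hrw : (List.replicate (t+1) w).flatten = w ++ (List.replicate t w).flatten := by
      rw [List.replicate_succ, List.flatten_cons]
    rcases lt_or_ge j w.length with hj | hj
    · rw [List.getElem_of_eq hrw, List.getElem_append_left hj]
      congr 1
      exact (Nat.mod_eq_of_lt hj).symm
    · have h' : j - w.length < t * w.length := by
        have : (t+1) * w.length = w.length + t * w.length := by ring
        omega
      rw [List.getElem_of_eq hrw]
      rw [List.getElem_append_right hj]
      have := ih (j - w.length) h'
      rw [this]
      congr 1
      exact (Nat.mod_eq_sub_mod hj).symm

-- orbit reduction mod a period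
lemma pow_apply_mod {n : ℕ} (σ : Equiv.Perm (Fin n)) (x : Fin n) (p : ℕ)
    (hp : (σ ^ p) x = x) (j : ℕ) : (σ ^ j) x = (σ ^ (j % p)) x := by
  have hfix : ∀ q, ((σ ^ p) ^ q) x = x := by
    intro q
    induction q with
    | zero => simp
    | succ q ih => rw [pow_succ, Equiv.Perm.mul_apply, hp, ih]
  conv_lhs => rw [show j = j % p + p * (j / p) from (Nat.mod_add_div j p).symm]
  rw [pow_add, pow_mul, Equiv.Perm.mul_apply, hfix]

/-- A word (finite list) is primitive if it is not a nontrivial power `y^m`, `m ≥ 2`,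
of another word. -/
def IsPrimitiveWord {α : Type*} (w : List α) : Prop :=
  ¬ ∃ (y : List α) (m : ℕ), 2 ≤ m ∧ w = (List.replicate m y).flatten

/-- let `std` be the standardization map (characterized by
`std g j < std g k ↔ g j < g k ∨ (g j = g k ∧ j < k)`), let `x₁` satisfy `std(g)^k(x₁) = x₁`,
and form the word `i = (g(x₁), g(std(g)(x₁)), …, g(std(g)^{k-1}(x₁)))`. If `r` is the root of
`i`, i.e. the primitive word such that `i` is a power of `r`, then the length of `r` equals the
size of the cycle of `x₁` in `std(g)` (the minimal period of `x₁` under `std(g)`). -/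
theorem stmt13 (n : ℕ)
    (std : (Fin n → ℝ) → Equiv.Perm (Fin n))
    (hstd : ∀ (g : Fin n → ℝ) (j k : Fin n),
      std g j < std g k ↔ (g j < g k ∨ (g j = g k ∧ j < k)))
    (g : Fin n → ℝ) (k : ℕ) (hk : 1 ≤ k) (x₁ : Fin n)
    (hx : ((std g) ^ k) x₁ = x₁)
    (r : List ℝ) (hr : IsPrimitiveWord r) (m : ℕ)
    (hroot : List.ofFn (fun j : Fin k => g (((std g) ^ (j : ℕ)) x₁)) =
      (List.replicate m r).flatten) :
    r.length = Function.minimalPeriod (std g) x₁ := by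
  set σ := std g with hσ
  set ℓ := r.length with hℓ
  set y : ℕ → Fin n := fun j => (σ ^ j) x₁ with hy
  -- lengths
  have hlen : k = m * ℓ := by
    have := congrArg List.length hroot
    rwa [List.length_ofFn, len_flat] at this
  have hℓpos : 0 < ℓ := by
    rcases Nat.eq_zero_or_pos ℓ with h0 | h0
    · rw [h0, Nat.mul_zero] at hlen; omega
    · exact h0
  have hdvd : ℓ ∣ k := ⟨m, by rw [hlen, Nat.mul_comm]⟩
  -- element values
  have hi : ∀ j, j < k → g (y j) = r.getD (j % ℓ) 0 := by
    intro j hj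
    have h1 : (List.ofFn (fun j : Fin k => g (((std g) ^ (j : ℕ)) x₁)))[j]'(by
        rw [List.length_ofFn]; exact hj) = g (y j) := by
      rw [List.getElem_ofFn]
    have h2 := getElem_flat r m j (by rw [← hlen]; exact hj)
    rw [List.getElem_of_eq hroot, h2] at h1
    rw [← h1, List.getD_eq_getElem]
  -- ℓ is a period of the orbit values
  have hF : ∀ j : ℕ, g (y (j + ℓ)) = g (y j) := by
    intro j
    have e1 : y (j + ℓ) = y ((j + ℓ) % k) := pow_apply_mod σ x₁ k hx _
    have e2 : y j = y (j % k) := pow_apply_mod σ x₁ k hx _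
    rw [e1, e2, hi _ (Nat.mod_lt _ (by omega)), hi _ (Nat.mod_lt _ (by omega)),
      Nat.mod_mod_of_dvd _ hdvd, Nat.mod_mod_of_dvd _ hdvd, Nat.add_mod_right]
  -- σ^ℓ fixes x₁
  have hper : (σ ^ ℓ) x₁ = x₁ := by
    by_contra hne
    have succ_apply : ∀ j : ℕ, y (j + 1) = σ (y j) := by
      intro j
      show (σ ^ (j + 1)) x₁ = σ ((σ ^ j) x₁)
      rw [pow_succ', Equiv.Perm.mul_apply]
    have step : ∀ j : ℕ, y j < y (j + ℓ) → y (j + 1) < y (j + 1 + ℓ) := by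
      intro j hlt
      have : σ (y j) < σ (y (j + ℓ)) := by
        rw [hstd]
        exact Or.inr ⟨(hF j).symm, hlt⟩
      rw [← succ_apply, ← succ_apply] at this
      have e : j + ℓ + 1 = j + 1 + ℓ := by omega
      rwa [e] at this
    have step' : ∀ j : ℕ, y (j + ℓ) < y j → y (j + 1 + ℓ) < y (j + 1) := by
      intro j hlt
      have : σ (y (j + ℓ)) < σ (y j) := by
        rw [hstd]
        exact Or.inr ⟨hF j, hlt⟩
      rw [← succ_apply, ← succ_apply] at this
      have e : j + ℓ + 1 = j + 1 + ℓ := by omega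
      rwa [e] at this
    have hcyc : y (k * ℓ) = y 0 := by
      have := pow_apply_mod σ x₁ k hx (k * ℓ)
      simpa [hy, Nat.mul_mod_right] using this
    rcases lt_or_gt_of_ne hne with hlt' | hlt
    · -- y ℓ < y 0
      have all : ∀ j : ℕ, y (j + ℓ) < y j := by
        intro j
        induction j with
        | zero => simpa [hy] using hlt'
        | succ j ih => exact step' j ih
      have mono : StrictAnti (fun t : ℕ => y (t * ℓ)) := by
        apply strictAnti_nat_of_succ_lt
        intro t
        have := all (t * ℓ)
        have e : t * ℓ + ℓ = (t + 1) * ℓ := by ring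
        rwa [e] at this
      have := mono (show (0:ℕ) < k from by omega)
      simp only [Nat.zero_mul] at this
      rw [hcyc] at this
      exact lt_irrefl _ this
    · -- y 0 < y ℓ
      have all : ∀ j : ℕ, y j < y (j + ℓ) := by
        intro j
        induction j with
        | zero => simpa [hy] using hlt
        | succ j ih => exact step j ih
      have mono : StrictMono (fun t : ℕ => y (t * ℓ)) := by
        apply strictMono_nat_of_lt_succ
        intro t
        have := all (t * ℓ)
        have e : t * ℓ + ℓ = (t + 1) * ℓ := by ring
        rwa [e] at this
      have := mono (show (0:ℕ) < k from by omega)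
      simp only [Nat.zero_mul] at this
      rw [hcyc] at this
      exact lt_irrefl _ this
  -- minimal period divides ℓ
  set d := Function.minimalPeriod (⇑σ) x₁ with hd
  have hpt : Function.IsPeriodicPt (⇑σ) ℓ x₁ := hper
  have hddvd : d ∣ ℓ := Function.IsPeriodicPt.minimalPeriod_dvd hpt
  have hdpos : 0 < d := Function.IsPeriodicPt.minimalPeriod_pos hℓpos hpt
  have hyd : (σ ^ d) x₁ = x₁ := Function.isPeriodicPt_minimalPeriod (⇑σ) x₁
  -- show ℓ = d by primitivity
  obtain ⟨t, ht⟩ := hddvd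
  have htpos : 0 < t := by
    rcases Nat.eq_zero_or_pos t with h0 | h0
    · rw [h0, Nat.mul_zero] at ht; omega
    · exact h0
  rcases Nat.lt_or_ge t 2 with ht1 | ht2
  · -- t = 1
    have : t = 1 := by omega
    rw [ht, this, Nat.mul_one]
  · -- t ≥ 2 contradicts primitivity
    exfalso
    apply hr
    refine ⟨List.ofFn (fun j : Fin d => g (y j)), t, ht2, ?_⟩
    apply List.ext_getElem
    · rw [len_flat, List.length_ofFn, ← hℓ, ht]; ring
    · intro j h1 h2
      have hjℓ : j < ℓ := h1
      have hjk : j < k := lt_of_lt_of_le hjℓ (Nat.le_of_dvd (by omega) hdvd)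
      have hflat := getElem_flat (List.ofFn (fun j : Fin d => g (y j))) t j
        (by rw [List.length_ofFn, Nat.mul_comm, ← ht]; exact hjℓ)
      have hval : r[j]'h1 = g (y j) := by
        have := hi j hjk
        rw [Nat.mod_eq_of_lt hjℓ, List.getD_eq_getElem _ _ h1] at this
        exact this.symm
      rw [hval]
      have hperd : y j = y (j % d) := pow_apply_mod σ x₁ d hyd j
      rw [hflat, List.getElem_ofFn]
      simp only [List.length_ofFn]
      rw [hperd]
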